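/- Let P, Q, U, V ∈ ℝ³ with P·U = 0 and Q·V = 0, let c ∈ ℝ, and suppose ‖P‖‖Q‖ = 0 and b := ‖U‖‖V‖ ≠ 0 (a toroidal general predicate). Then det(M(P,Q,U,V,c) − λI) = ((λ − (c − b))(λ − (c + b)))² for all λ, so the spectrum of M consists of exactly the two distinct real eigenvalues c − b and c + b, each of algebraic multiplicity two. -/

import Mathlib

open Matrix

/-- Squared-sum Euclidean norm on `ℝ³` (represented as `Fin 3 → ℝ`). -/
noncomputable def norm3 (v : Fin 3 → ℝ) : ℝ := Real.sqrt (v 0 ^ 2 + v 1 ^ 2 + v 2 ^ 2)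

/-- Dot product on `ℝ³`. -/
def dot3 (u v : Fin 3 → ℝ) : ℝ := u 0 * v 0 + u 1 * v 1 + u 2 * v 2

/-- Cross product on `ℝ³`. -/
def cross3 (u v : Fin 3 → ℝ) : Fin 3 → ℝ :=
  ![u 1 * v 2 - u 2 * v 1, u 2 * v 0 - u 0 * v 2, u 0 * v 1 - u 1 * v 0]

/-- The symmetric matrix `M(P,Q,U,V,c)` of the quadratic form associated with a
general predicate.  Components are indexed `1,2,3` in the paper and `0,1,2` here. -/
noncomputable def Mmat (P Q U V : Fin 3 → ℝ) (c : ℝ) : Matrix (Fin 4) (Fin 4) ℝ :=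
  let R : Fin 3 → ℝ := cross3 P Q + cross3 U V
  let T : ℝ := dot3 P Q + dot3 U V
  !![2*(P 2 * Q 2 + U 2 * V 2) - T + c, 2*(P 0 * Q 2 + U 0 * V 2) + R 1,
       2*(P 2 * Q 1 + U 2 * V 1) + R 0, R 2;
     2*(P 0 * Q 2 + U 0 * V 2) + R 1, 2*(P 0 * Q 0 + U 0 * V 0) - T + c,
       2*(P 1 * Q 0 + U 1 * V 0) + R 2, R 0;
     2*(P 2 * Q 1 + U 2 * V 1) + R 0, 2*(P 1 * Q 0 + U 1 * V 0) + R 2,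
       2*(P 1 * Q 1 + U 1 * V 1) - T + c, R 1;
     R 2, R 0, R 1, T + c]


set_option maxHeartbeats 1000000 in
private lemma sub_smul_lit4 (a b c d e f g h i j k l m n o p lam : ℝ) :
    (!![a,b,c,d;e,f,g,h;i,j,k,l;m,n,o,p] : Matrix (Fin 4) (Fin 4) ℝ)
        - lam • (1 : Matrix (Fin 4) (Fin 4) ℝ)
      = !![a-lam,b,c,d;e,f-lam,g,h;i,j,k-lam,l;m,n,o,p-lam] := by
  ext i j
  fin_cases i <;> fin_cases j <;>
    simp [Matrix.one_apply, Matrix.sub_apply, Matrix.smul_apply]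

set_option maxHeartbeats 1000000 in
private lemma det4_lit (a b c d e f g h i j k l m n o p : ℝ) :
    (!![a,b,c,d;e,f,g,h;i,j,k,l;m,n,o,p] : Matrix (Fin 4) (Fin 4) ℝ).det
      = a*(f*(k*p-l*o) - g*(j*p-l*n) + h*(j*o-k*n))
        - b*(e*(k*p-l*o) - g*(i*p-l*m) + h*(i*o-k*m))
        + c*(e*(j*p-l*n) - f*(i*p-l*m) + h*(i*n-j*m))
        - d*(e*(j*o-k*n) - f*(i*o-k*m) + g*(i*n-j*m)) := by
  simp [Matrix.det_succ_row_zero, Fin.sum_univ_succ, Fin.succAbove]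
  ring

set_option maxHeartbeats 1000000 in
private lemma det_key (P Q U V : Fin 3 → ℝ) (c b lam : ℝ)
    (hPQ : ∀ i j : Fin 3, P i * Q j = 0)
    (hb2 : b ^ 2 = (U 0 ^ 2 + U 1 ^ 2 + U 2 ^ 2) * (V 0 ^ 2 + V 1 ^ 2 + V 2 ^ 2)) :
    (Mmat P Q U V c - lam • (1 : Matrix (Fin 4) (Fin 4) ℝ)).det
      = ((lam - (c - b)) * (lam - (c + b))) ^ 2 := by
  simp only [Mmat]
  rw [sub_smul_lit4, det4_lit]
  simp only [cross3, dot3, Pi.add_apply, Matrix.cons_val_zero, Matrix.cons_val_one,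
    Matrix.head_cons, Matrix.cons_val_two, Matrix.tail_cons, hPQ]
  linear_combination (2*(lam-c)^2
    - (U 0 ^ 2 + U 1 ^ 2 + U 2 ^ 2) * (V 0 ^ 2 + V 1 ^ 2 + V 2 ^ 2) - b^2) * hb2

private lemma norm3_zero {v : Fin 3 → ℝ} (h : norm3 v = 0) :
    v 0 = 0 ∧ v 1 = 0 ∧ v 2 = 0 := by
  have hs : v 0 ^ 2 + v 1 ^ 2 + v 2 ^ 2 ≤ 0 := Real.sqrt_eq_zero'.mp h
  refine ⟨?_, ?_, ?_⟩ <;>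
  · refine pow_eq_zero_iff (n := 2) (by norm_num) |>.mp (le_antisymm ?_ (sq_nonneg _))
    nlinarith [sq_nonneg (v 0), sq_nonneg (v 1), sq_nonneg (v 2)]

/-- for a toroidal general predicate with `‖P‖‖Q‖ = 0` and `b = ‖U‖‖V‖ ≠ 0`,
the characteristic determinant factors as `((λ − (c − b))(λ − (c + b)))²`, so the spectrum
of `M` consists of exactly the two distinct eigenvalues `c − b` and `c + b`, each of
algebraic multiplicity two. -/
theorem statement4 (P Q U V : Fin 3 → ℝ) (hPU : dot3 P U = 0) (hQV : dot3 Q V = 0)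
    (c : ℝ) (ha : norm3 P * norm3 Q = 0)
    (b : ℝ) (hbdef : b = norm3 U * norm3 V) (hb : b ≠ 0) :
    (∀ lam : ℝ, (Mmat P Q U V c - lam • (1 : Matrix (Fin 4) (Fin 4) ℝ)).det
        = ((lam - (c - b)) * (lam - (c + b))) ^ 2)
    ∧ c - b ≠ c + b
    ∧ {lam : ℝ | (Mmat P Q U V c - lam • (1 : Matrix (Fin 4) (Fin 4) ℝ)).det = 0}
        = {c - b, c + b} := by

  have hPQ : ∀ i j : Fin 3, P i * Q j = 0 := by
    rcases mul_eq_zero.mp ha with h | h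
    · obtain ⟨h0, h1, h2⟩ := norm3_zero h
      intro i j; fin_cases i <;> simp [h0, h1, h2]
    · obtain ⟨h0, h1, h2⟩ := norm3_zero h
      intro i j; fin_cases j <;> simp [h0, h1, h2]
  have hb2 : b ^ 2 = (U 0 ^ 2 + U 1 ^ 2 + U 2 ^ 2) * (V 0 ^ 2 + V 1 ^ 2 + V 2 ^ 2) := by
    rw [hbdef, norm3, norm3, mul_pow, Real.sq_sqrt (by positivity),
      Real.sq_sqrt (by positivity)]
  have key : ∀ lam : ℝ, (Mmat P Q U V c - lam • (1 : Matrix (Fin 4) (Fin 4) ℝ)).det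
      = ((lam - (c - b)) * (lam - (c + b))) ^ 2 :=
    fun lam => det_key P Q U V c b lam hPQ hb2
  refine ⟨key, fun h => hb (by linarith), ?_⟩
  ext lam
  simp only [Set.mem_setOf_eq, key lam, Set.mem_insert_iff, Set.mem_singleton_iff]
  constructor
  · intro h
    have h' := pow_eq_zero_iff (n := 2) (by norm_num) |>.mp h
    rcases mul_eq_zero.mp h' with h'' | h''
    · left; linarith [sub_eq_zero.mp h'']
    · right; linarith [sub_eq_zero.mp h'']
  · rintro (rfl | rfl) <;> ring
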